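/- Let p and b be positive integers, S₁, S₂ > 0, and for S > 0 let clip_S : ℝ^p → ℝ^p denote the radial clipping map clip_S(x) = x / max(1, ‖x‖/S), where ‖·‖ is the Euclidean norm. Fix a mask M ∈ {0,1}^p and define, for a batch g = (g₁, …, g_b) of vectors in ℝ^p, the output F(g) = clip_{S₂}( M ⊙ ( (1/b) ∑_{j=1}^b clip_{S₁}(g_j) ) ), where ⊙ denotes the coordinatewise (Hadamard) product. Then for any two batches g and g′ that agree in all but one index j₀, ‖F(g) − F(g′)‖ ≤ 2·min(S₁/b, S₂). -/

import Mathlib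

variable {E : Type*} [NormedAddCommGroup E] [InnerProductSpace ℝ E]

lemma clipS_norm_le (S : ℝ) (hS : 0 < S) (x : E) :
    ‖(max 1 (‖x‖ / S))⁻¹ • x‖ ≤ S := by
  have ht : (0:ℝ) < max 1 (‖x‖ / S) := lt_of_lt_of_le one_pos (le_max_left _ _)
  have h : ‖x‖ ≤ max 1 (‖x‖ / S) * S := (div_le_iff₀ hS).mp (le_max_right _ _)
  rw [norm_smul, Real.norm_eq_abs, abs_inv, abs_of_pos ht, inv_mul_le_iff₀ ht]
  nlinarith

lemma proj_ineq (S : ℝ) (hS : 0 < S) (a z : E) (hz : ‖z‖ ≤ S) :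
    (inner ℝ (a - (max 1 (‖a‖ / S))⁻¹ • a) (z - (max 1 (‖a‖ / S))⁻¹ • a) : ℝ) ≤ 0 := by
  rcases le_or_gt (‖a‖ / S) 1 with h | h
  · simp [max_eq_left h]
  · have ht : max 1 (‖a‖ / S) = ‖a‖ / S := max_eq_right h.le
    have ha : S < ‖a‖ := by
      have := (lt_div_iff₀ hS).mp h
      linarith
    have ha0 : (0:ℝ) < ‖a‖ := hS.trans ha
    rw [ht]
    have h1 : a - (‖a‖ / S)⁻¹ • a = (1 - (‖a‖ / S)⁻¹) • a := by
      rw [sub_smul, one_smul]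
    rw [h1, real_inner_smul_left, inner_sub_right, real_inner_smul_right,
      real_inner_self_eq_norm_sq]
    have hinv : (‖a‖ / S)⁻¹ = S / ‖a‖ := by rw [inv_div]
    have h2 : (inner ℝ a z : ℝ) - (‖a‖ / S)⁻¹ * ‖a‖ ^ 2 ≤ 0 := by
      have hcs := real_inner_le_norm a z
      have h2' : (inner ℝ a z : ℝ) ≤ ‖a‖ * S := hcs.trans (by nlinarith)
      rw [hinv]
      have : S / ‖a‖ * ‖a‖ ^ 2 = S * ‖a‖ := by field_simp
      nlinarith
    have h3 : 0 ≤ 1 - (‖a‖ / S)⁻¹ := by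
      rw [hinv]
      have : S / ‖a‖ ≤ 1 := (div_le_one ha0).mpr ha.le
      linarith
    calc (1 - (‖a‖ / S)⁻¹) * ((inner ℝ a z : ℝ) - (‖a‖ / S)⁻¹ * ‖a‖ ^ 2)
        ≤ (1 - (‖a‖ / S)⁻¹) * 0 := mul_le_mul_of_nonneg_left h2 h3
      _ = 0 := by ring

lemma clip_nonexp (S : ℝ) (hS : 0 < S) (a c : E) :
    ‖(max 1 (‖a‖ / S))⁻¹ • a - (max 1 (‖c‖ / S))⁻¹ • c‖ ≤ ‖a - c‖ := by
  set fa := (max 1 (‖a‖ / S))⁻¹ • a with hfa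
  set fc := (max 1 (‖c‖ / S))⁻¹ • c with hfc
  have h1 : (inner ℝ (a - fa) (fc - fa) : ℝ) ≤ 0 := proj_ineq S hS a fc (clipS_norm_le S hS c)
  have h2 : (inner ℝ (c - fc) (fa - fc) : ℝ) ≤ 0 := proj_ineq S hS c fa (clipS_norm_le S hS a)
  have key : ‖fa - fc‖ ^ 2 ≤ (inner ℝ (a - c) (fa - fc) : ℝ) := by
    have hdec : (inner ℝ (fa - fc) (fa - fc) : ℝ) - (inner ℝ (a - c) (fa - fc) : ℝ)
        = (inner ℝ (fa - a) (fa - fc) : ℝ) + (inner ℝ (c - fc) (fa - fc) : ℝ) := by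
      rw [← inner_sub_left, ← inner_add_left]
      congr 1
      abel
    have h1' : (inner ℝ (fa - a) (fa - fc) : ℝ) ≤ 0 := by
      have hne : (inner ℝ (fa - a) (fa - fc) : ℝ) = (inner ℝ (a - fa) (fc - fa) : ℝ) := by
        rw [← inner_neg_neg]
        congr 1 <;> abel
      rw [hne]; exact h1
    have hself := real_inner_self_eq_norm_sq (fa - fc)
    nlinarith
  have hcs : (inner ℝ (a - c) (fa - fc) : ℝ) ≤ ‖a - c‖ * ‖fa - fc‖ := real_inner_le_norm _ _
  rcases eq_or_lt_of_le (norm_nonneg (fa - fc)) with h0 | h0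
  · rw [← h0]; exact norm_nonneg _
  · nlinarith

lemma mask_nonexp {p : ℕ} (M : Fin p → ℝ) (hM : ∀ i, M i = 0 ∨ M i = 1)
    (v w u u' : EuclideanSpace ℝ (Fin p))
    (hu : ∀ i, u i = M i * v i) (hu' : ∀ i, u' i = M i * w i) :
    ‖u - u'‖ ≤ ‖v - w‖ := by
  rw [EuclideanSpace.norm_eq, EuclideanSpace.norm_eq]
  apply Real.sqrt_le_sqrt
  apply Finset.sum_le_sum
  intro i _
  have h1 : (u - u') i = u i - u' i := rfl
  have h2 : (v - w) i = v i - w i := rfl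
  rw [h1, h2, hu, hu', ← mul_sub]
  rcases hM i with h | h <;> simp [h]
  positivity

theorem stmt_13 (p b : ℕ) (hp : 0 < p) (hb : 0 < b) (S₁ S₂ : ℝ)
    (hS₁ : 0 < S₁) (hS₂ : 0 < S₂)
    (clip : ℝ → EuclideanSpace ℝ (Fin p) → EuclideanSpace ℝ (Fin p))
    (hclip : ∀ (S : ℝ) (x : EuclideanSpace ℝ (Fin p)),
      clip S x = (max 1 (‖x‖ / S))⁻¹ • x)
    (M : Fin p → ℝ) (hM : ∀ i, M i = 0 ∨ M i = 1)
    (F : (Fin b → EuclideanSpace ℝ (Fin p)) → EuclideanSpace ℝ (Fin p))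
    (hF : ∀ g : Fin b → EuclideanSpace ℝ (Fin p),
      F g = clip S₂ (WithLp.toLp 2 (fun i =>
        M i * ((1 / (b : ℝ)) • ∑ j : Fin b, clip S₁ (g j)) i)))
    (g g' : Fin b → EuclideanSpace ℝ (Fin p)) (j₀ : Fin b)
    (hagree : ∀ j : Fin b, j ≠ j₀ → g j = g' j) :
    ‖F g - F g'‖ ≤ 2 * min (S₁ / b) S₂ := by
  have hbR : (0:ℝ) < (b:ℝ) := Nat.cast_pos.mpr hb
  have hclipnorm : ∀ (S : ℝ), 0 < S → ∀ x, ‖clip S x‖ ≤ S := by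
    intro S hS x
    rw [hclip]
    exact clipS_norm_le S hS x
  set A : EuclideanSpace ℝ (Fin p) := (1 / (b : ℝ)) • ∑ j : Fin b, clip S₁ (g j) with hA
  set A' : EuclideanSpace ℝ (Fin p) := (1 / (b : ℝ)) • ∑ j : Fin b, clip S₁ (g' j) with hA'
  set u : EuclideanSpace ℝ (Fin p) := WithLp.toLp 2 (fun i => M i * A i) with hu
  set u' : EuclideanSpace ℝ (Fin p) := WithLp.toLp 2 (fun i => M i * A' i) with hu'
  have hFg : F g = clip S₂ u := hF g
  have hFg' : F g' = clip S₂ u' := hF g'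
  -- bound 1: 2 S₂
  have b1 : ‖F g - F g'‖ ≤ 2 * S₂ := by
    calc ‖F g - F g'‖ ≤ ‖F g‖ + ‖F g'‖ := norm_sub_le _ _
      _ ≤ S₂ + S₂ := by
          rw [hFg, hFg']
          exact add_le_add (hclipnorm S₂ hS₂ u) (hclipnorm S₂ hS₂ u')
      _ = 2 * S₂ := by ring
  -- bound 2: 2 S₁ / b
  have hsum : ∑ j : Fin b, (clip S₁ (g j) - clip S₁ (g' j))
      = clip S₁ (g j₀) - clip S₁ (g' j₀) := by
    rw [Finset.sum_eq_single j₀]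
    · intro j _ hj
      rw [hagree j hj, sub_self]
    · intro h
      exact absurd (Finset.mem_univ j₀) h
  have hAA : A - A' = (1 / (b : ℝ)) • (clip S₁ (g j₀) - clip S₁ (g' j₀)) := by
    rw [hA, hA', ← smul_sub, ← Finset.sum_sub_distrib, hsum]
  have b2 : ‖F g - F g'‖ ≤ 2 * (S₁ / b) := by
    have step1 : ‖F g - F g'‖ ≤ ‖u - u'‖ := by
      rw [hFg, hFg', hclip, hclip]
      exact clip_nonexp S₂ hS₂ u u'
    have step2 : ‖u - u'‖ ≤ ‖A - A'‖ :=
      mask_nonexp M hM A A' u u' (fun i => rfl) (fun i => rfl)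
    have step3 : ‖A - A'‖ ≤ 2 * (S₁ / b) := by
      rw [hAA, norm_smul, Real.norm_eq_abs, abs_of_pos (by positivity)]
      have hd : ‖clip S₁ (g j₀) - clip S₁ (g' j₀)‖ ≤ 2 * S₁ := by
        calc ‖clip S₁ (g j₀) - clip S₁ (g' j₀)‖
            ≤ ‖clip S₁ (g j₀)‖ + ‖clip S₁ (g' j₀)‖ := norm_sub_le _ _
          _ ≤ S₁ + S₁ := add_le_add (hclipnorm S₁ hS₁ _) (hclipnorm S₁ hS₁ _)
          _ = 2 * S₁ := by ring
      calc (1 / (b:ℝ)) * ‖clip S₁ (g j₀) - clip S₁ (g' j₀)‖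
          ≤ (1 / (b:ℝ)) * (2 * S₁) := by
            exact mul_le_mul_of_nonneg_left hd (by positivity)
        _ = 2 * (S₁ / b) := by ring
    exact step1.trans (step2.trans step3)
  have : 2 * min (S₁ / b) S₂ = min (2 * (S₁ / b)) (2 * S₂) := by
    rw [mul_min_of_nonneg _ _ (by norm_num : (0:ℝ) ≤ 2)]
  rw [this]
  exact le_min b2 b1
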